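/- Let q be a complex-valued elliptic quadratic form on ℝ^(2n) with Re q ≤ 0, Re q ≢ 0, and whose Hamilton map F has no real eigenvalue. Then for every nonzero X₀ ∈ ℝ^(2n), there exists an integer j₀ with 0 ≤ j₀ ≤ 2n-1 such that Re q((Im F)^{j₀} X₀) < 0 and Re q((Im F)^j X₀) = 0 for all 0 ≤ j < j₀. Consequently the symbol q has finite order at most 4n-2 at every nonzero point of its numerical range. -/

import Mathlib

open scoped BigOperators
open Finset

noncomputable section

/-- Phase space `ℝ^n × ℝ^n` (representing `ℝ^(2n)` with coordinates `(x, ξ)`). -/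
abbrev RV (n : ℕ) := (Fin n → ℝ) × (Fin n → ℝ)

/-- Complexified phase space `ℂ^n × ℂ^n`. -/
abbrev CV (n : ℕ) := (Fin n → ℂ) × (Fin n → ℂ)

/-- The standard symplectic form `σ((x,ξ),(y,η)) = ξ·y - x·η` on `ℝ^(2n)`. -/
def sympR {n : ℕ} (X Y : RV n) : ℝ := (∑ i, X.2 i * Y.1 i) - ∑ i, X.1 i * Y.2 i

/-- The standard symplectic form extended bilinearly to `ℂ^(2n)`. -/
def sympC {n : ℕ} (X Y : CV n) : ℂ := (∑ i, X.2 i * Y.1 i) - ∑ i, X.1 i * Y.2 i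

/-- Embedding of `ℝ^(2n)` into `ℂ^(2n)`. -/
def toC {n : ℕ} (X : RV n) : CV n := (fun i => (X.1 i : ℂ), fun i => (X.2 i : ℂ))

section Aux
variable {n : ℕ}

lemma sympR_self (X : RV n) : sympR X X = 0 := by
  simp [sympR, mul_comm]

lemma sympR_add_right (X Y Y' : RV n) : sympR X (Y + Y') = sympR X Y + sympR X Y' := by
  simp [sympR, mul_add, Finset.sum_add_distrib]; ring_nf

lemma sympR_smul_right (t : ℝ) (X Y : RV n) : sympR X (t • Y) = t * sympR X Y := by
  simp only [sympR, Prod.smul_fst, Prod.smul_snd, Pi.smul_apply, smul_eq_mul, Finset.mul_sum, mul_sub]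
  congr 1 <;> (apply Finset.sum_congr rfl; intros; ring)

lemma sympR_add_left (X X' Y : RV n) : sympR (X + X') Y = sympR X Y + sympR X' Y := by
  simp [sympR, add_mul, Finset.sum_add_distrib]; ring_nf

lemma sympR_smul_left (t : ℝ) (X Y : RV n) : sympR (t • X) Y = t * sympR X Y := by
  simp only [sympR, Prod.smul_fst, Prod.smul_snd, Pi.smul_apply, smul_eq_mul, Finset.mul_sum, mul_sub]
  congr 1 <;> (apply Finset.sum_congr rfl; intros; ring)

lemma sympR_zero_right (X : RV n) : sympR X 0 = 0 := by simp [sympR]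

lemma sympR_nondeg (W : RV n) (h : ∀ Y : RV n, sympR Y W = 0) : W = 0 := by
  have h1 := h (-W.2, W.1)
  simp only [sympR] at h1
  have h2 : (∑ i, W.1 i * W.1 i) + ∑ i, W.2 i * W.2 i = 0 := by
    rw [← h1]
    rw [sub_eq_add_neg, ← Finset.sum_neg_distrib]
    congr 1
    apply Finset.sum_congr rfl; intros; simp
  have hn1 : ∀ i ∈ Finset.univ (α := Fin n), (0:ℝ) ≤ W.1 i * W.1 i := fun i _ => mul_self_nonneg _
  have hn2 : ∀ i ∈ Finset.univ (α := Fin n), (0:ℝ) ≤ W.2 i * W.2 i := fun i _ => mul_self_nonneg _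
  have e1 : ∑ i, W.1 i * W.1 i = 0 := by nlinarith [Finset.sum_nonneg hn1, Finset.sum_nonneg hn2]
  have e2 : ∑ i, W.2 i * W.2 i = 0 := by nlinarith [Finset.sum_nonneg hn1, Finset.sum_nonneg hn2]
  have f1 := (Finset.sum_eq_zero_iff_of_nonneg hn1).1 e1
  have f2 := (Finset.sum_eq_zero_iff_of_nonneg hn2).1 e2
  ext i
  · exact mul_self_eq_zero.1 (f1 i (Finset.mem_univ i))
  · exact mul_self_eq_zero.1 (f2 i (Finset.mem_univ i))

lemma toC_zero : toC (0 : RV n) = 0 := by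
  simp [toC]; rfl

lemma toC_add (A B : RV n) : toC (A + B) = toC A + toC B := by
  apply Prod.ext <;> funext i <;> simp [toC]

lemma toC_neg (A : RV n) : toC (-A) = -toC A := by
  apply Prod.ext <;> funext i <;> simp [toC]

lemma toC_eq_zero {A : RV n} (h : toC A = 0) : A = 0 := by
  have h1 := congrArg Prod.fst h
  have h2 := congrArg Prod.snd h
  ext i
  · have := congrFun h1 i; simpa [toC, Complex.ext_iff] using this
  · have := congrFun h2 i; simpa [toC, Complex.ext_iff] using this

lemma csmul_decomp (c : ℂ) (A B : RV n) :
    c • (toC A + Complex.I • toC B) =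
      toC (c.re • A - c.im • B) + Complex.I • toC (c.re • B + c.im • A) := by
  apply Prod.ext <;> funext i <;>
    simp [toC, Complex.ext_iff, Complex.mul_re, Complex.mul_im] <;> (try ring_nf) <;> (try constructor) <;> (try ring_nf) <;> trivial

lemma toC_pair_inj {U U' W W' : RV n}
    (h : toC U + Complex.I • toC U' = toC W + Complex.I • toC W') : U = W ∧ U' = W' := by
  have h1 := congrArg Prod.fst h
  have h2 := congrArg Prod.snd h
  constructor <;> ext i
  · have h := congrFun h1 i; rw [Complex.ext_iff] at h; simpa [toC] using h.1
  · have h := congrFun h2 i; rw [Complex.ext_iff] at h; simpa [toC] using h.1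
  · have h := congrFun h1 i; rw [Complex.ext_iff] at h; simpa [toC] using h.2
  · have h := congrFun h2 i; rw [Complex.ext_iff] at h; simpa [toC] using h.2

lemma quad_root {c0 c1 c2 : ℝ} (h0 : 0 < c0) (h1 : c0 + c1 + c2 < 0) :
    ∃ t ∈ Set.Icc (0:ℝ) 1, c0 + c1*t + c2*t^2 = 0 := by
  have hc : Continuous fun t : ℝ => c0 + c1*t + c2*t^2 := by continuity
  have hsub := intermediate_value_Icc' (zero_le_one (α := ℝ)) hc.continuousOn
  have hmem : (0:ℝ) ∈ Set.Icc (c0 + c1*1 + c2*1^2) (c0 + c1*0 + c2*0^2) := by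
    constructor <;> simp <;> nlinarith
  obtain ⟨t, ht, hft⟩ := hsub hmem
  exact ⟨t, ht, hft⟩

end Aux

/-- let `q` be an elliptic complex quadratic form on `ℝ^(2n)` with
`Re q ≤ 0`, `Re q ≢ 0`, and Hamilton map `F = G + iH` with no real eigenvalue. Then for
every nonzero `X₀` there is `j₀ ≤ 2n-1` with `Re q((Im F)^{j₀} X₀) < 0` and
`Re q((Im F)^j X₀) = 0` for all `j < j₀` (so `q` is of finite order `≤ 4n-2` at every
nonzero point of its numerical range). -/


theorem stmt12 {n : ℕ} (q : QuadraticMap ℝ (RV n) ℂ)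
    (hell : ∀ X : RV n, q X = 0 → X = 0)
    (hre : ∀ X : RV n, (q X).re ≤ 0)
    (hne : ∃ X : RV n, (q X).re ≠ 0)
    (G H : Module.End ℝ (RV n))
    (hG : ∀ X Y : RV n, ((1 / 2 : ℂ) * QuadraticMap.polar (⇑q) X Y).re = sympR X (G Y))
    (hH : ∀ X Y : RV n, ((1 / 2 : ℂ) * QuadraticMap.polar (⇑q) X Y).im = sympR X (H Y))
    (F : CV n →ₗ[ℂ] CV n)
    (hGH : ∀ X : RV n, F (toC X) = toC (G X) + Complex.I • toC (H X))
    (hnoreal : ∀ (lam : ℝ) (Z : CV n), Z ≠ 0 → F Z ≠ (lam : ℂ) • Z) :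
    ∀ X₀ : RV n, X₀ ≠ 0 → ∃ j₀ : ℕ, j₀ ≤ 2 * n - 1 ∧
      (q ((H ^ j₀) X₀)).re < 0 ∧ ∀ j < j₀, (q ((H ^ j) X₀)).re = 0 := by
  classical
  -- basic consequences of hG, hH
  have hpolar : ∀ X : RV n, (1 / 2 : ℂ) * QuadraticMap.polar (⇑q) X X = q X := by
    intro X
    rw [QuadraticMap.polar_self, two_smul]
    ring
  have hqre : ∀ X : RV n, (q X).re = sympR X (G X) := by
    intro X; rw [← hG X X, hpolar]
  have hqim : ∀ X : RV n, (q X).im = sympR X (H X) := by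
    intro X; rw [← hH X X, hpolar]
  have hGsymm : ∀ X Y : RV n, sympR X (G Y) = sympR Y (G X) := by
    intro X Y; rw [← hG, ← hG, QuadraticMap.polar_comm]
  have hHsymm : ∀ X Y : RV n, sympR X (H Y) = sympR Y (H X) := by
    intro X Y; rw [← hH, ← hH, QuadraticMap.polar_comm]
  -- kernel lemma: Re q X = 0 → G X = 0
  have hker : ∀ X : RV n, (q X).re = 0 → G X = 0 := by
    intro X h0
    apply sympR_nondeg
    intro Y
    by_contra hc
    set B : ℝ := sympR Y (G X) with hB
    set t : ℝ := (1 - (q Y).re) / (2 * B) with ht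
    have hBne : (2 : ℝ) * B ≠ 0 := by
      intro h; exact hc (by linarith)
    have hexp : (q (Y + t • X)).re = (q Y).re + 2 * t * B := by
      rw [hqre, map_add, map_smul]
      simp only [sympR_add_left, sympR_add_right, sympR_smul_left, sympR_smul_right]
      have e1 : sympR X (G X) = 0 := by rw [← hqre]; exact h0
      have e2 : sympR X (G Y) = B := by rw [hB]; exact hGsymm X Y
      rw [e1, e2, ← hqre, ← hB]
      ring
    have hval : (q (Y + t • X)).re = 1 := by
      rw [hexp, ht]
      field_simp
      ring
    have := hre (Y + t • X)
    rw [hval] at this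
    linarith
  intro X₀ hX₀
  -- case n = 0
  rcases Nat.eq_zero_or_pos n with hn0 | hn0
  · exfalso
    apply hX₀
    subst hn0
    ext i <;> exact absurd i.2 (by omega)
  -- main dichotomy
  by_cases hT : ∃ j, (q ((H ^ j) X₀)).re < 0 ∧ j < 2 * n
  · set P : ℕ → Prop := fun j => (q ((H ^ j) X₀)).re < 0 ∧ j < 2 * n with hP
    have hex : ∃ j, P j := hT
    refine ⟨Nat.find hex, ?_, ?_, ?_⟩
    · have := (Nat.find_spec hex).2; omega
    · exact (Nat.find_spec hex).1
    · intro j hj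
      have hnP := Nat.find_min hex hj
      have hjlt : j < 2 * n := lt_trans hj (Nat.find_spec hex).2
      have : ¬ (q ((H ^ j) X₀)).re < 0 := fun h => hnP ⟨h, hjlt⟩
      linarith [hre ((H ^ j) X₀)]
  · exfalso
    push_neg at hT
    have hzero : ∀ j < 2 * n, (q ((H ^ j) X₀)).re = 0 := by
      intro j hj
      rcases lt_or_eq_of_le (hre ((H ^ j) X₀)) with h | h
      · exact absurd hj (not_lt.2 (hT j h))
      · exact h
    have hGzero' : ∀ j < 2 * n, G ((H ^ j) X₀) = 0 := fun j hj => hker _ (hzero j hj)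
    -- Cayley-Hamilton: extend to all j
    have hfr : Module.finrank ℝ (RV n) = 2 * n := by
      rw [Module.finrank_prod, Module.finrank_fin_fun]; omega
    set p : Polynomial ℝ := LinearMap.charpoly H with hp
    have hdeg : p.natDegree = 2 * n := by rw [hp, LinearMap.charpoly_natDegree, hfr]
    have hCH : Polynomial.aeval H p = 0 := LinearMap.aeval_self_charpoly H
    have hrel : (H ^ (2 * n)) X₀ = -∑ i ∈ Finset.range (2 * n), p.coeff i • (H ^ i) X₀ := by
      have e1 : Polynomial.aeval H p = ∑ i ∈ Finset.range (p.natDegree + 1), p.coeff i • H ^ i :=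
        Polynomial.aeval_eq_sum_range H
      rw [hCH, hdeg] at e1
      have e2 := congrArg (fun (f : Module.End ℝ (RV n)) => f X₀) e1.symm
      simp only [LinearMap.zero_apply, LinearMap.sum_apply, LinearMap.smul_apply] at e2
      rw [Finset.sum_range_succ] at e2
      have hmon : p.coeff (2 * n) = 1 := by
        have := (LinearMap.charpoly_monic H).coeff_natDegree
        rwa [hdeg] at this
      rw [hmon, one_smul] at e2
      exact eq_neg_of_add_eq_zero_right e2
    have hGzero : ∀ m : ℕ, G ((H ^ m) X₀) = 0 := by
      intro m
      induction m using Nat.strong_induction_on with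
      | _ m ih =>
        by_cases hm : m < 2 * n
        · exact hGzero' m hm
        · push_neg at hm
          have hsplit : (H ^ m) X₀ = (H ^ (m - 2 * n)) ((H ^ (2 * n)) X₀) := by
            rw [← Module.End.mul_apply, ← pow_add, Nat.sub_add_cancel hm]
          rw [hsplit, hrel, map_neg, map_sum, map_neg, map_sum]
          apply neg_eq_zero.2
          apply Finset.sum_eq_zero
          intro i hi
          rw [map_smul, map_smul]
          have : (H ^ (m - 2 * n)) ((H ^ i) X₀) = (H ^ (m - 2 * n + i)) X₀ := by
            rw [pow_add, Module.End.mul_apply]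
          rw [this, ih (m - 2 * n + i) (by rw [Finset.mem_range] at hi; omega)]
          simp
    -- the real span V
    set V : Submodule ℝ (RV n) := Submodule.span ℝ (Set.range fun j : ℕ => (H ^ j) X₀) with hV
    have hGV : ∀ U ∈ V, G U = 0 := by
      intro U hU
      induction hU using Submodule.span_induction with
      | mem x hx => obtain ⟨j, rfl⟩ := hx; exact hGzero j
      | zero => simp
      | add x y _ _ hx hy => rw [map_add, hx, hy, add_zero]
      | smul a x _ hx => rw [map_smul, hx, smul_zero]
    have hreV : ∀ U ∈ V, (q U).re = 0 := by
      intro U hU; rw [hqre, hGV U hU, sympR_zero_right]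
    have hdefV : ∀ U ∈ V, U ≠ 0 → (q U).im ≠ 0 := by
      intro U hU hUne him
      exact hUne (hell U (Complex.ext (hreV U hU) (by simpa using him)))
    -- sign coherence on V (IVT)
    have hsign : ∀ U₁ ∈ V, ∀ U₂ ∈ V, 0 < (q U₁).im → (q U₂).im < 0 → False := by
      intro U₁ hU₁ U₂ hU₂ h1 h2
      set D : RV n := U₂ - U₁ with hD
      have hexp : ∀ t : ℝ, (q (U₁ + t • D)).im =
          (q U₁).im + (sympR U₁ (H D) + sympR D (H U₁)) * t + sympR D (H D) * t^2 := by
        intro t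
        rw [hqim, map_add, map_smul]
        simp only [sympR_add_left, sympR_add_right, sympR_smul_left, sympR_smul_right]
        rw [← hqim]
        ring
      have hf1 : (q U₁).im + (sympR U₁ (H D) + sympR D (H U₁)) + sympR D (H D) < 0 := by
        have e : U₁ + (1:ℝ) • D = U₂ := by rw [one_smul, hD]; abel
        have h3 : (q (U₁ + (1:ℝ) • D)).im = (q U₂).im := by rw [e]
        rw [hexp 1] at h3
        nlinarith [h3, h2]
      obtain ⟨t, ht01, ht0⟩ := quad_root (c1 := sympR U₁ (H D) + sympR D (H U₁)) (c2 := sympR D (H D)) h1 hf1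
      set U : RV n := U₁ + t • D with hU
      have hUV : U ∈ V := by
        apply Submodule.add_mem _ hU₁
        exact Submodule.smul_mem _ _ (Submodule.sub_mem _ hU₂ hU₁)
      have hUim : (q U).im = 0 := by rw [hU, hexp t]; exact ht0
      have hU0 : U = 0 := hell U (Complex.ext (hreV U hUV) (by simpa using hUim))
      have hU0' : U₁ + t • D = 0 := hU.symm.trans hU0
      by_cases hteq : t = 0
      · rw [hteq, zero_smul, add_zero] at hU0'
        rw [hU0', QuadraticMap.map_zero] at h1
        simp at h1
      · have h5 : t • D = -U₁ := eq_neg_of_add_eq_zero_right hU0'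
        rw [hD, smul_sub] at h5
        have h4 : t • U₂ = (t - 1) • U₁ := by
          have h6 := sub_eq_iff_eq_add.mp h5
          rw [h6, sub_smul, one_smul]
          abel
        have h6 : U₂ = ((t - 1) / t) • U₁ := by
          have h7 := congrArg (fun W : RV n => (1 / t) • W) h4
          simp only [smul_smul] at h7
          rw [one_div, inv_mul_cancel₀ hteq, one_smul] at h7
          rw [h7]
          congr 1
          field_simp
        rw [h6, QuadraticMap.map_smul] at h2
        rw [Complex.smul_im] at h2
        rw [smul_eq_mul] at h2
        nlinarith
    -- the complex span W, invariant under F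
    set W : Submodule ℂ (CV n) := Submodule.span ℂ (Set.range fun j : ℕ => toC ((H ^ j) X₀)) with hW
    have hFW : ∀ Z ∈ W, F Z ∈ W := by
      intro Z hZ
      induction hZ using Submodule.span_induction with
      | mem x hx =>
          obtain ⟨j, rfl⟩ := hx
          rw [hGH, hGzero j, toC_zero, zero_add]
          refine Submodule.smul_mem _ _ (Submodule.subset_span ⟨j+1, ?_⟩)
          show toC ((H ^ (j+1)) X₀) = toC (H ((H ^ j) X₀))
          rw [pow_succ', Module.End.mul_apply]
      | zero => simp
      | add x y _ _ hx hy => rw [map_add]; exact Submodule.add_mem _ hx hy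
      | smul a x _ hx => rw [map_smul]; exact Submodule.smul_mem _ _ hx
    have hX₀W : toC X₀ ∈ W := Submodule.subset_span ⟨0, by simp⟩
    have hX₀C : toC X₀ ≠ 0 := fun h => hX₀ (toC_eq_zero h)
    haveI : Nontrivial W := nontrivial_of_ne ⟨toC X₀, hX₀W⟩ 0
      (fun h => hX₀C (congrArg Subtype.val h))
    obtain ⟨c, hc⟩ := Module.End.exists_eigenvalue (LinearMap.restrict F hFW)
    obtain ⟨z, hz⟩ := hc.exists_hasEigenvector
    have hZeig : F (z : CV n) = c • (z : CV n) := by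
      have h1 : (LinearMap.restrict F hFW) z = c • z := hz.apply_eq_smul
      have h2 := congrArg Subtype.val h1
      rwa [LinearMap.restrict_coe_apply] at h2
    have hZne : (z : CV n) ≠ 0 := fun h => hz.2 (by exact_mod_cast Subtype.ext h)
    -- decompose eigenvector over the real span V
    have hdecomp : ∀ Z ∈ W, ∃ A ∈ V, ∃ B ∈ V, Z = toC A + Complex.I • toC B := by
      intro Z hZ
      induction hZ using Submodule.span_induction with
      | mem x hx =>
          obtain ⟨j, rfl⟩ := hx
          exact ⟨(H ^ j) X₀, Submodule.subset_span ⟨j, rfl⟩, 0, Submodule.zero_mem _,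
            by rw [toC_zero, smul_zero, add_zero]⟩
      | zero =>
          exact ⟨0, Submodule.zero_mem _, 0, Submodule.zero_mem _,
            by rw [toC_zero, smul_zero, add_zero]⟩
      | add x y _ _ hx hy =>
          obtain ⟨A, hA, B, hB, rfl⟩ := hx
          obtain ⟨A', hA', B', hB', rfl⟩ := hy
          exact ⟨A + A', Submodule.add_mem _ hA hA', B + B', Submodule.add_mem _ hB hB',
            by rw [toC_add, toC_add, smul_add]; abel⟩
      | smul a x _ hx =>
          obtain ⟨A, hA, B, hB, rfl⟩ := hx
          exact ⟨a.re • A - a.im • B,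
            Submodule.sub_mem _ (Submodule.smul_mem _ _ hA) (Submodule.smul_mem _ _ hB),
            a.re • B + a.im • A,
            Submodule.add_mem _ (Submodule.smul_mem _ _ hB) (Submodule.smul_mem _ _ hA),
            csmul_decomp a A B⟩
    obtain ⟨A, hAV, B, hBV, hZdef⟩ := hdecomp _ z.2
    -- compute F z two ways
    have hFZ : F (z : CV n) = toC (-(H B)) + Complex.I • toC (H A) := by
      rw [hZdef, map_add, map_smul, hGH, hGH, hGV A hAV, hGV B hBV, toC_zero, zero_add,
        zero_add, toC_neg, smul_smul, Complex.I_mul_I, neg_one_smul]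
      abel
    have heig : toC (-(H B)) + Complex.I • toC (H A) =
        toC (c.re • A - c.im • B) + Complex.I • toC (c.re • B + c.im • A) := by
      rw [← hFZ, hZeig, hZdef, csmul_decomp]
    obtain ⟨e1, e2⟩ := toC_pair_inj heig
    -- the eigenvalue cannot be real
    have him : c.im ≠ 0 := by
      intro h0
      apply hnoreal c.re _ hZne
      rw [hZeig]
      congr 1
      have hcr : (↑c.re : ℂ) = c := Complex.ext (by simp) (by simp [h0])
      exact hcr.symm
    -- key orthogonality identities
    have e1' : H B = c.im • B + (-c.re) • A := by
      have h3 := congrArg Neg.neg e1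
      rw [neg_neg, neg_sub] at h3
      rw [h3, neg_smul]
      abel
    have k1 : sympR A (H (H A)) = 0 := by rw [hHsymm A (H A), sympR_self]
    have k2 : sympR B (H (H B)) = 0 := by rw [hHsymm B (H B), sympR_self]
    rw [e2, map_add, map_smul, map_smul, sympR_add_right, sympR_smul_right,
      sympR_smul_right] at k1
    rw [e1', map_add, map_smul, map_smul, sympR_add_right, sympR_smul_right,
      sympR_smul_right] at k2
    have hsym2 : sympR A (H B) = sympR B (H A) := hHsymm A B
    have hsum0 : sympR A (H A) + sympR B (H B) = 0 := by
      have h4 : c.im * (sympR A (H A) + sympR B (H B)) = 0 := by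
        linear_combination k1 + k2 - c.re * hsym2
      rcases mul_eq_zero.1 h4 with h | h
      · exact absurd h him
      · exact h
    have hsum : (q A).im + (q B).im = 0 := by rw [hqim, hqim]; exact hsum0
    have hZnevec : A ≠ 0 ∨ B ≠ 0 := by
      by_contra hc'
      push_neg at hc'
      apply hZne
      rw [hZdef, hc'.1, hc'.2, toC_zero, smul_zero, add_zero]
    rcases eq_or_ne A 0 with hA0 | hA0
    · have hB0 : B ≠ 0 := by
        rcases hZnevec with h | h
        · exact absurd hA0 h
        · exact h
      have hB0' : (q B).im = 0 := by
        rw [hA0, QuadraticMap.map_zero] at hsum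
        simpa using hsum
      exact hdefV B hBV hB0 hB0'
    · rcases eq_or_ne B 0 with hB0 | hB0
      · have hA0' : (q A).im = 0 := by
          rw [hB0, QuadraticMap.map_zero] at hsum
          simpa using hsum
        exact hdefV A hAV hA0 hA0'
      · have hA' := hdefV A hAV hA0
        rcases lt_or_gt_of_ne hA' with h | h
        · exact hsign B hBV A hAV (by linarith) h
        · exact hsign A hAV B hBV h (by linarith)
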